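/- Let X, Q be finite-dimensional real inner product spaces, Ξ : X → Q linear and surjective with inf-sup constant β > 0 (i.e., sup_{0≠x} ⟨Ξx,η⟩/‖x‖ ≥ β‖η‖ for all η ∈ Q), let A be a bilinear form on X bounded by M, with inf-sup constant α > 0 on K = ker Ξ. Then every x ∈ K° := {x : A(x,k)=0 ∀k∈K} satisfies ‖x‖ ≤ β⁻¹(1 + 2M/α)‖Ξ x‖. -/

import Mathlib

open RealInnerProductSpace

/-- Quantitative estimate for elements of the A-polar complement of `ker Ξ`:
they are controlled by the norm of their constraint residual. -/
theorem stmt9 {X Q : Type*}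
    [NormedAddCommGroup X] [InnerProductSpace ℝ X] [FiniteDimensional ℝ X]
    [NormedAddCommGroup Q] [InnerProductSpace ℝ Q] [FiniteDimensional ℝ Q]
    (Ξ : X →ₗ[ℝ] Q) (hsurj : LinearMap.range Ξ = ⊤)
    (A : X →ₗ[ℝ] X →ₗ[ℝ] ℝ) (M α β : ℝ) (hM : 0 < M) (hα : 0 < α) (hβ : 0 < β)
    (hbound : ∀ x y : X, |A x y| ≤ M * ‖x‖ * ‖y‖)
    (hαinfsup : ∀ u ∈ LinearMap.ker Ξ, α * ‖u‖ ≤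
      ⨆ v : {v : X // v ∈ LinearMap.ker Ξ ∧ v ≠ 0}, A u v.1 / ‖v.1‖)
    (hβinfsup : ∀ η : Q, β * ‖η‖ ≤ ⨆ x : {x : X // x ≠ 0}, ⟪Ξ x.1, η⟫ / ‖x.1‖) :
    ∀ x : X, (∀ k ∈ LinearMap.ker Ξ, A x k = 0) →
      ‖x‖ ≤ β⁻¹ * (1 + 2 * M / α) * ‖Ξ x‖ := by
  intro x hx
  set K := LinearMap.ker Ξ with hK
  set T := LinearMap.adjoint Ξ with hT
  -- kernel characterization
  have hker : K = (LinearMap.range T)ᗮ := by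
    ext v
    simp only [hK, LinearMap.mem_ker, Submodule.mem_orthogonal]
    constructor
    · intro hv u hu
      obtain ⟨η, rfl⟩ := hu
      rw [LinearMap.adjoint_inner_left, hv, inner_zero_right]
    · intro h
      have h2 := h (T (Ξ v)) ⟨Ξ v, rfl⟩
      rw [LinearMap.adjoint_inner_left] at h2
      exact inner_self_eq_zero.mp h2
  set xK : X := (K.orthogonalProjectionOnto x : X) with hxK
  set xp : X := x - xK with hxp
  have hmemK : xK ∈ K := (K.orthogonalProjectionOnto x).2
  have hperp : xp ∈ Kᗮ := Submodule.sub_starProjection_mem_orthogonal (K := K) x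
  have hrange : xp ∈ LinearMap.range T := by
    rw [hker, Submodule.orthogonal_orthogonal] at hperp
    exact hperp
  obtain ⟨η, hη⟩ := hrange
  have hΞxp : Ξ xp = Ξ x := by
    have : Ξ xK = 0 := hmemK
    simp [hxp, map_sub, this]
  -- Bound 1 : ‖xp‖ ≤ β⁻¹ * ‖Ξ x‖
  have hb1 : ‖xp‖ ≤ β⁻¹ * ‖Ξ x‖ := by
    rcases eq_or_ne xp 0 with h0 | h0
    · rw [h0, norm_zero]
      positivity
    · have hne : Nonempty {x : X // x ≠ 0} := ⟨⟨xp, h0⟩⟩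
      have hsup : (⨆ v : {v : X // v ≠ 0}, ⟪Ξ v.1, η⟫ / ‖v.1‖) ≤ ‖xp‖ := by
        apply ciSup_le
        intro v
        have hv : (0:ℝ) < ‖v.1‖ := norm_pos_iff.mpr v.2
        rw [div_le_iff₀ hv]
        calc ⟪Ξ v.1, η⟫ = ⟪v.1, T η⟫ := (LinearMap.adjoint_inner_right Ξ v.1 η).symm
          _ ≤ ‖v.1‖ * ‖T η‖ := real_inner_le_norm _ _
          _ = ‖xp‖ * ‖v.1‖ := by rw [hη]; ring
      have hβη : β * ‖η‖ ≤ ‖xp‖ := (hβinfsup η).trans hsup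
      have hηn : ‖η‖ ≤ β⁻¹ * ‖xp‖ := by
        rw [inv_mul_eq_div]; exact (le_div_iff₀' hβ).mpr hβη
      have hsq : ‖xp‖ ^ 2 ≤ ‖η‖ * ‖Ξ xp‖ := by
        have h1 : ‖xp‖ ^ 2 = ⟪T η, xp⟫ := by
          rw [hη, real_inner_self_eq_norm_sq]
        have h2 : ⟪T η, xp⟫ = ⟪η, Ξ xp⟫ := LinearMap.adjoint_inner_left Ξ xp η
        rw [h1, h2]
        exact real_inner_le_norm _ _
      have hxpn : (0:ℝ) < ‖xp‖ := norm_pos_iff.mpr h0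
      rw [hΞxp] at hsq
      nlinarith [norm_nonneg (Ξ x)]
  -- Bound 2 : ‖xK‖ ≤ (M/α) * ‖xp‖
  have hb2 : ‖xK‖ ≤ M / α * ‖xp‖ := by
    have hsup2 : (⨆ v : {v : X // v ∈ K ∧ v ≠ 0}, A xK v.1 / ‖v.1‖) ≤ M * ‖xp‖ := by
      rcases isEmpty_or_nonempty {v : X // v ∈ K ∧ v ≠ 0} with hE | hNE
      · rw [Real.iSup_of_isEmpty]
        positivity
      · apply ciSup_le
        intro v
        have hv : (0:ℝ) < ‖v.1‖ := norm_pos_iff.mpr v.2.2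
        rw [div_le_iff₀ hv]
        have hAxv : A x v.1 = 0 := hx v.1 v.2.1
        have hKv : A xK v.1 = - A xp v.1 := by
          have : A xp v.1 = A x v.1 - A xK v.1 := by
            rw [hxp, map_sub, LinearMap.sub_apply]
          rw [this, hAxv]; ring
        calc A xK v.1 = - A xp v.1 := hKv
          _ ≤ |A xp v.1| := neg_le_abs _
          _ ≤ M * ‖xp‖ * ‖v.1‖ := hbound xp v.1
    have h := (hαinfsup xK hmemK).trans hsup2
    rw [div_mul_eq_mul_div, le_div_iff₀ hα]
    nlinarith
  have hxsum : ‖x‖ ≤ ‖xK‖ + ‖xp‖ := by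
    have hx' : x = xK + xp := by rw [hxp]; abel
    rw [hx']
    exact norm_add_le _ _
  have hMα : (0:ℝ) ≤ M / α := by positivity
  have hβi : (0:ℝ) ≤ β⁻¹ := by positivity
  have hc : (0:ℝ) ≤ ‖Ξ x‖ := norm_nonneg _
  have hMα2 : M / α ≤ 2 * M / α := by
    have h2 : 2 * M / α = 2 * (M / α) := by ring
    rw [h2]; linarith
  calc ‖x‖ ≤ ‖xK‖ + ‖xp‖ := hxsum
    _ ≤ M / α * ‖xp‖ + ‖xp‖ := by linarith
    _ = (1 + M / α) * ‖xp‖ := by ring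
    _ ≤ (1 + M / α) * (β⁻¹ * ‖Ξ x‖) := by
        apply mul_le_mul_of_nonneg_left hb1; linarith
    _ = β⁻¹ * (1 + M / α) * ‖Ξ x‖ := by ring
    _ ≤ β⁻¹ * (1 + 2 * M / α) * ‖Ξ x‖ := by
        apply mul_le_mul_of_nonneg_right _ hc
        apply mul_le_mul_of_nonneg_left _ hβi
        linarith
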